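/- Weighted subject reduction for β-redexes: if π is a derivation of Γ ⊢_D (λx.M)N : α then there exists a derivation π' of Γ ⊢_D M{N/x} : α with #app(π') = #app(π) − 1. -/

import Mathlib

/-- Untyped λ⊥-terms in de Bruijn notation, intrinsically scoped:
`Tm n` is the set of λ⊥-terms with free variables among `x₀,…,x_{n-1}`. -/
inductive Tm : ℕ → Type
  | var : ∀ {n : ℕ}, Fin n → Tm n
  | lam : ∀ {n : ℕ}, Tm (n + 1) → Tm n
  | app : ∀ {n : ℕ}, Tm n → Tm n → Tm n
  | bot : ∀ {n : ℕ}, Tm n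

/-- Renaming of free variables. -/
def Tm.rename : ∀ {n m : ℕ}, (Fin n → Fin m) → Tm n → Tm m
  | _, _, f, .var k => .var (f k)
  | _, m, f, .lam t =>
      .lam (t.rename fun k => Fin.cases (motive := fun _ => Fin (m + 1)) 0
        (fun j => (f j).succ) k)
  | _, _, f, .app t u => .app (t.rename f) (u.rename f)
  | _, _, _, .bot => .bot

/-- Simultaneous (capture-avoiding) substitution. -/
def Tm.subst : ∀ {n m : ℕ}, (Fin n → Tm m) → Tm n → Tm m
  | _, _, σ, .var k => σ k
  | _, m, σ, .lam t =>
      .lam (t.subst fun k => Fin.cases (motive := fun _ => Tm (m + 1)) (.var 0)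
        (fun j => (σ j).rename Fin.succ) k)
  | _, _, σ, .app t u => .app (t.subst σ) (u.subst σ)
  | _, _, _, .bot => .bot

/-- Substitution `M{N/y}` of `N` for the 0-th free variable of `M`. -/
def Tm.subst1 {n : ℕ} (M : Tm (n + 1)) (N : Tm n) : Tm n :=
  M.subst (Fin.cases (motive := fun _ => Tm n) N Tm.var)

/-- One-step β-reduction (contextual closure of `(λx.M)N → M{N/x}`). -/
inductive Beta : ∀ {n : ℕ}, Tm n → Tm n → Prop
  | redex {n} (M : Tm (n + 1)) (N : Tm n) : Beta (.app (.lam M) N) (M.subst1 N)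
  | appL {n} {M M' N : Tm n} : Beta M M' → Beta (.app M N) (.app M' N)
  | appR {n} {M N N' : Tm n} : Beta N N' → Beta (.app M N) (.app M N')
  | lam {n} {M M' : Tm (n + 1)} : Beta M M' → Beta (.lam M) (.lam M')

/-- A λ⊥-term is a λ-term when it contains no occurrence of `⊥`. -/
def BotFree : ∀ {n : ℕ}, Tm n → Prop
  | _, .var _ => True
  | _, .lam M => BotFree M
  | _, .app M N => BotFree M ∧ BotFree N
  | _, .bot => False

/-- The environment assigning the multiset `[α]` to the variable `k` and `0` elsewhere. -/
def single {D : Type} {n : ℕ} (k : Fin n) (α : D) : Fin n → Multiset D :=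
  fun j => if j = k then {α} else 0

/-- The relational interpretation `⟦M⟧_{x̄} ⊆ M_f(D)ⁿ × D` of a λ⊥-term in a relational
graph model `(D, i)`. -/
def Interp {D : Type} (i : Multiset D × D → D) :
    ∀ {n : ℕ}, Tm n → Set ((Fin n → Multiset D) × D)
  | _, .var k => {p | ∃ α, p = (single k α, α)}
  | _, .lam M => {p | ∃ Γ a α, (Fin.cons a Γ, α) ∈ Interp i M ∧ p = (Γ, i (a, α))}
  | n, .app M N =>
      {p | ∃ (Γ₀ : Fin n → Multiset D) (l : List ((Fin n → Multiset D) × D)),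
        (Γ₀, i (↑(l.map Prod.snd), p.2)) ∈ Interp i M ∧
        (∀ q ∈ l, q ∈ Interp i N) ∧ p.1 = Γ₀ + (l.map Prod.fst).sum}
  | _, .bot => ∅

/-- The non-idempotent intersection type system associated with a relational graph model
`(D, i)`: `Der i Γ M α m` states that the judgment `Γ ⊢ M : α` is derivable by a
derivation `π` with `#app(π) = m` occurrences of the application rule. -/
inductive Der {D : Type} (i : Multiset D × D → D) :
    ∀ {n : ℕ}, (Fin n → Multiset D) → Tm n → D → ℕ → Prop
  | var {n} (k : Fin n) (α : D) : Der i (single k α) (.var k) α 0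
  | lam {n} {Γ : Fin n → Multiset D} {a : Multiset D} {M : Tm (n + 1)} {α : D} {m : ℕ} :
      Der i (Fin.cons a Γ) M α m → Der i Γ (.lam M) (i (a, α)) m
  | app {n} {Γ : Fin n → Multiset D} {M N : Tm n} {α : D} {m : ℕ}
      (l : List ((Fin n → Multiset D) × D × ℕ)) :
      Der i Γ M (i (↑(l.map fun q => q.2.1), α)) m →
      (∀ q ∈ l, Der i q.1 N q.2.1 q.2.2) →
      Der i (Γ + (l.map fun q => q.1).sum) (.app M N) α
        (m + (l.map fun q => q.2.2).sum + 1)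

section SRaux

open Tm

variable {D : Type}

/-- size of a term, for strong induction -/
def tsize : ∀ {n : ℕ}, Tm n → ℕ
  | _, .var _ => 1
  | _, .bot => 1
  | _, .lam t => tsize t + 1
  | _, .app t u => tsize t + tsize u + 1

/-- pushforward of an environment along a renaming -/
def ren {n m : ℕ} (f : Fin n → Fin m) (Γ : Fin n → Multiset D) : Fin m → Multiset D :=
  fun j => ∑ k : Fin n, if f k = j then Γ k else 0

lemma ren_single {n m : ℕ} (f : Fin n → Fin m) (k : Fin n) (α : D) :
    ren f (single k α) = single (f k) α := by
  funext j
  show (∑ k' : Fin n, if f k' = j then single k α k' else 0) = _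
  rw [Finset.sum_eq_single k]
  · simp [single, eq_comm]
  · intro b _ hb; simp [single, hb]
  · simp

lemma ren_add {n m : ℕ} (f : Fin n → Fin m) (Γ Δ : Fin n → Multiset D) :
    ren f (Γ + Δ) = ren f Γ + ren f Δ := by
  funext j
  show (∑ k : Fin n, if f k = j then (Γ + Δ) k else 0)
    = (∑ k : Fin n, if f k = j then Γ k else 0) + (∑ k : Fin n, if f k = j then Δ k else 0)
  rw [← Finset.sum_add_distrib]
  exact Finset.sum_congr rfl fun k _ => by by_cases h : f k = j <;> simp [h]

lemma ren_listSum {n m : ℕ} (f : Fin n → Fin m) (l : List (Fin n → Multiset D)) :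
    ren f l.sum = (l.map (ren f)).sum := by
  induction l with
  | nil => funext j; simp [ren]
  | cons x l ih => simp only [List.sum_cons, List.map_cons, ren_add, ih]

lemma ren_lift {n m : ℕ} (f : Fin n → Fin m) (a : Multiset D) (Γ : Fin n → Multiset D) :
    ren (fun k => Fin.cases (motive := fun _ => Fin (m + 1)) 0 (fun j => (f j).succ) k)
      (Fin.cons a Γ) = Fin.cons a (ren f Γ) := by
  funext j
  refine Fin.cases ?_ (fun j' => ?_) j
  · show (∑ k : Fin (n+1), _) = a
    rw [Fin.sum_univ_succ]
    simp [Fin.succ_ne_zero]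
  · show (∑ k : Fin (n+1), _) = ren f Γ j'
    rw [Fin.sum_univ_succ]
    have h0 : ((0 : Fin (m+1)) = j'.succ) = False := by
      simp [(Fin.succ_ne_zero j').symm]
    simp only [Fin.cases_zero, Fin.cases_succ, Fin.cons_zero, Fin.cons_succ, h0, if_false,
      Fin.succ_inj, zero_add]
    rfl

lemma der_rename {i : Multiset D × D → D} :
    ∀ {n : ℕ} {Γ : Fin n → Multiset D} {M : Tm n} {α : D} {w : ℕ},
      Der i Γ M α w → ∀ {m : ℕ} (f : Fin n → Fin m),
      Der i (ren f Γ) (M.rename f) α w := by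
  intro n Γ M α w h
  induction h with
  | var k β =>
      intro m f
      rw [ren_single]
      exact Der.var (f k) β
  | lam h ih =>
      intro m f
      have H := ih (fun k => Fin.cases (motive := fun _ => Fin (m + 1)) 0
        (fun j => (f j).succ) k)
      rw [ren_lift] at H
      exact Der.lam H
  | @app _ Γ M N β w' l hM hN ihM ihN =>
      intro m f
      have hty : ((l.map fun q => ((ren f q.1 : Fin m → Multiset D), q.2)).map
          fun q => q.2.1) = l.map fun q => q.2.1 := by
        simp [List.map_map, Function.comp_def]
      have h1 : Der i (ren f Γ) (M.rename f)
          (i (↑((l.map fun q => ((ren f q.1 : Fin m → Multiset D), q.2)).map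
            fun q => q.2.1), β)) w' := by
        rw [hty]; exact ihM f
      have h2 : ∀ q ∈ (l.map fun q => ((ren f q.1 : Fin m → Multiset D), q.2)),
          Der i q.1 (N.rename f) q.2.1 q.2.2 := by
        intro q hq
        simp only [List.mem_map] at hq
        obtain ⟨r, hr, rfl⟩ := hq
        exact ihN r hr f
      have H := Der.app _ h1 h2
      have hctx : (((l.map fun q => ((ren f q.1 : Fin m → Multiset D), q.2)).map
          fun q => q.1).sum) = ren f ((l.map fun q => q.1).sum) := by
        rw [ren_listSum]; simp [List.map_map, Function.comp_def]
      have hw : (((l.map fun q => ((ren f q.1 : Fin m → Multiset D), q.2)).map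
          fun q => q.2.2).sum) = (l.map fun q => q.2.2).sum := by
        simp [List.map_map, Function.comp_def]
      rw [hctx, hw, ← ren_add] at H
      exact H

lemma cons_add_cons {n : ℕ} (a b : Multiset D) (Γ Δ : Fin n → Multiset D) :
    (Fin.cons a Γ : Fin (n+1) → Multiset D) + Fin.cons b Δ = Fin.cons (a + b) (Γ + Δ) := by
  funext j
  refine Fin.cases ?_ (fun j' => ?_) j <;> simp

lemma ren_succ {n : ℕ} (Γ : Fin n → Multiset D) :
    ren Fin.succ Γ = Fin.cons 0 Γ := by
  funext j
  refine Fin.cases ?_ (fun j' => ?_) j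
  · show (∑ k : Fin n, _) = _
    rw [Fin.cons_zero]
    exact Finset.sum_eq_zero fun k _ => by simp [Fin.succ_ne_zero]
  · show (∑ k : Fin n, if Fin.succ k = j'.succ then Γ k else 0) = _
    rw [Fin.cons_succ, Finset.sum_eq_single j']
    · simp
    · intro b _ hb; simp [Fin.succ_inj, hb]
    · simp

lemma sum_map_cons0 {n : ℕ} (L : List ((Fin n → Multiset D) × D × ℕ)) :
    ((L.map fun r => (Fin.cons (0 : Multiset D) r.1 : Fin (n+1) → Multiset D))).sum
      = Fin.cons 0 ((L.map fun r => r.1).sum) := by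
  induction L with
  | nil =>
      funext j
      refine Fin.cases ?_ (fun j' => ?_) j <;> simp
  | cons x L ih => simp [ih, cons_add_cons]

lemma listSum_apply {n : ℕ} (l : List (Fin n → Multiset D)) (p : Fin n) :
    l.sum p = (l.map fun Γ => Γ p).sum := by
  induction l with
  | nil => rfl
  | cons x l ih => simp [ih]

/-- removing the `p`-th entry of an environment -/
def rem {n : ℕ} (p : Fin (n + 1)) (Δ : Fin (n + 1) → Multiset D) : Fin n → Multiset D :=
  fun j => Δ (p.succAbove j)

lemma rem_add {n : ℕ} (p : Fin (n + 1)) (Γ Δ : Fin (n + 1) → Multiset D) :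
    rem p (Γ + Δ) = rem p Γ + rem p Δ := rfl

lemma rem_listSum {n : ℕ} (p : Fin (n + 1)) (l : List (Fin (n+1) → Multiset D)) :
    rem p l.sum = (l.map (rem p)).sum := by
  induction l with
  | nil => rfl
  | cons x l ih => rw [List.sum_cons, rem_add, ih, List.map_cons, List.sum_cons]

lemma rem_cons {n : ℕ} (p : Fin (n+1)) (a : Multiset D) (Δ : Fin (n+1) → Multiset D) :
    rem p.succ (Fin.cons a Δ) = Fin.cons a (rem p Δ) := by
  funext j
  refine Fin.cases ?_ (fun j' => ?_) j
  · show (Fin.cons a Δ : Fin (n+2) → Multiset D) (p.succ.succAbove 0) = _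
    rw [Fin.succ_succAbove_zero, Fin.cons_zero, Fin.cons_zero]
  · show (Fin.cons a Δ : Fin (n+2) → Multiset D) (p.succ.succAbove j'.succ) = _
    rw [Fin.succ_succAbove_succ, Fin.cons_succ, Fin.cons_succ]
    rfl

/-- substitution of `N` for the `p`-th variable -/
def sub1 {n : ℕ} (p : Fin (n + 1)) (N : Tm n) : Fin (n + 1) → Tm n :=
  Fin.succAboveCases (α := fun _ => Tm n) p N Tm.var

lemma sub1_self {n : ℕ} (p : Fin (n + 1)) (N : Tm n) : sub1 p N p = N :=
  Fin.insertNth_apply_same (α := fun _ => Tm n) p N Tm.var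

lemma sub1_succAbove {n : ℕ} (p : Fin (n + 1)) (N : Tm n) (j : Fin n) :
    sub1 p N (p.succAbove j) = Tm.var j :=
  Fin.insertNth_apply_succAbove (α := fun _ => Tm n) p N Tm.var j

lemma sub1_lift {n : ℕ} (p : Fin (n + 1)) (N : Tm n) :
    (fun k => Fin.cases (motive := fun _ => Tm (n + 1)) (.var 0)
      (fun j => (sub1 p N j).rename Fin.succ) k) = sub1 p.succ (N.rename Fin.succ) := by
  funext k
  by_cases hk : k = p.succ
  · subst hk
    show Fin.cases (motive := fun _ => Tm (n + 1)) (.var 0)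
      (fun j => (sub1 p N j).rename Fin.succ) p.succ = _
    rw [Fin.cases_succ, sub1_self, sub1_self]
  · obtain ⟨j, rfl⟩ := Fin.exists_succAbove_eq hk
    rw [sub1_succAbove]
    refine Fin.cases ?_ (fun j' => ?_) j
    · rw [Fin.succ_succAbove_zero, Fin.cases_zero]
    · rw [Fin.succ_succAbove_succ, Fin.cases_succ, sub1_succAbove]
      rfl

lemma split_list {β : Type} (f : β → D) :
    ∀ (L : List β) (a b : Multiset D), (↑(L.map f) : Multiset D) = a + b →
    ∃ L₁ L₂ : List β, (L₁ ++ L₂).Perm L ∧ (↑(L₁.map f) : Multiset D) = a ∧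
      (↑(L₂.map f) : Multiset D) = b := by
  intro L
  induction L with
  | nil =>
      intro a b h
      simp only [List.map_nil, Multiset.coe_nil] at h
      have ha : a = 0 ∧ b = 0 := by
        constructor
        · exact Multiset.le_zero.mp (h ▸ le_add_right le_rfl : a ≤ (0:Multiset D))
        · exact Multiset.le_zero.mp (h ▸ le_add_left le_rfl : b ≤ (0:Multiset D))
      exact ⟨[], [], List.Perm.refl _, by simp [ha.1], by simp [ha.2]⟩
  | cons x L ih =>
      intro a b h
      rw [List.map_cons, ← Multiset.cons_coe] at h
      have hx : f x ∈ a + b := h ▸ Multiset.mem_cons_self _ _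
      rcases Multiset.mem_add.mp hx with hxa | hxb
      · obtain ⟨a', rfl⟩ := Multiset.exists_cons_of_mem hxa
        rw [Multiset.cons_add] at h
        obtain ⟨L₁, L₂, hp, h1, h2⟩ := ih a' b ((Multiset.cons_inj_right _).mp h)
        exact ⟨x :: L₁, L₂, hp.cons x, by rw [List.map_cons, ← Multiset.cons_coe, h1],
          h2⟩
      · obtain ⟨b', rfl⟩ := Multiset.exists_cons_of_mem hxb
        rw [add_comm, Multiset.cons_add, add_comm b' a] at h
        obtain ⟨L₁, L₂, hp, h1, h2⟩ := ih a b' ((Multiset.cons_inj_right _).mp h)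
        refine ⟨L₁, x :: L₂, ?_, h1, by rw [List.map_cons, ← Multiset.cons_coe, h2]⟩
        exact List.Perm.trans List.perm_middle (hp.cons x)

lemma build {n m : ℕ}
    (φ : (Fin m → Multiset D) → Multiset D) (g : (Fin m → Multiset D) → (Fin n → Multiset D))
    (R Q : (Fin n → Multiset D) → D → ℕ → Prop) :
    ∀ (l : List ((Fin m → Multiset D) × D × ℕ)) (L : List ((Fin n → Multiset D) × D × ℕ)),
    (∀ q ∈ l, ∀ L' : List ((Fin n → Multiset D) × D × ℕ),
        (↑(L'.map fun r => r.2.1) : Multiset D) = φ q.1 →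
        (∀ r ∈ L', R r.1 r.2.1 r.2.2) →
        Q (g q.1 + (L'.map fun r => r.1).sum) q.2.1 (q.2.2 + (L'.map fun r => r.2.2).sum)) →
    (↑(L.map fun r => r.2.1) : Multiset D) = (l.map fun q => φ q.1).sum →
    (∀ r ∈ L, R r.1 r.2.1 r.2.2) →
    ∃ l' : List ((Fin n → Multiset D) × D × ℕ),
      (l'.map fun q => q.2.1) = (l.map fun q => q.2.1) ∧
      (∀ q ∈ l', Q q.1 q.2.1 q.2.2) ∧
      (l'.map fun q => q.1).sum = (l.map fun q => g q.1).sum + (L.map fun r => r.1).sum ∧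
      (l'.map fun q => q.2.2).sum = (l.map fun q => q.2.2).sum + (L.map fun r => r.2.2).sum := by
  intro l
  induction l with
  | nil =>
      intro L _ hty _
      simp only [List.map_nil, List.sum_nil] at hty
      have : L.map (fun r => r.2.1) = [] := (Multiset.coe_eq_zero _).mp hty
      have hL : L = [] := List.map_eq_nil_iff.mp this
      subst hL
      exact ⟨[], by simp, by simp, by simp, by simp⟩
  | cons q l ih =>
      intro L hq hty hR
      simp only [List.map_cons, List.sum_cons] at hty
      obtain ⟨L₁, L₂, hperm, h1, h2⟩ := split_list (fun r => r.2.1) L (φ q.1) _ hty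
      have hmem : ∀ r, r ∈ L₁ ∨ r ∈ L₂ → r ∈ L := by
        intro r hr
        exact hperm.mem_iff.mp (List.mem_append.mpr hr)
      have hhead := hq q List.mem_cons_self L₁ h1
        (fun r hr => hR r (hmem r (Or.inl hr)))
      obtain ⟨l', hty', hQ', hctx', hw'⟩ := ih L₂
        (fun q' hq' L' => hq q' (List.mem_cons_of_mem _ hq') L')
        h2 (fun r hr => hR r (hmem r (Or.inr hr)))
      refine ⟨(g q.1 + (L₁.map fun r => r.1).sum, q.2.1,
        q.2.2 + (L₁.map fun r => r.2.2).sum) :: l', ?_, ?_, ?_, ?_⟩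
      · simp [hty']
      · intro q' hq'
        rcases List.mem_cons.mp hq' with rfl | hq''
        · exact hhead
        · exact hQ' q' hq''
      · have hsf : (L₁.map fun r => r.1).sum + (L₂.map fun r => r.1).sum
            = (L.map fun r => r.1).sum := by
          have := (hperm.map fun r => r.1).sum_eq
          rwa [List.map_append, List.sum_append] at this
        simp only [List.map_cons, List.sum_cons, hctx', ← hsf]
        exact add_add_add_comm _ _ _ _
      · have hsw : (L₁.map fun r => r.2.2).sum + (L₂.map fun r => r.2.2).sum
            = (L.map fun r => r.2.2).sum := by
          have := (hperm.map fun r => r.2.2).sum_eq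
          rwa [List.map_append, List.sum_append] at this
        simp only [List.map_cons, List.sum_cons, hw']
        omega

end SRaux

lemma subst_var {n m : ℕ} (σ : Fin n → Tm m) (k : Fin n) :
    (Tm.var k).subst σ = σ k := rfl

lemma key {D : Type} {i : Multiset D × D → D} :
    ∀ (s : ℕ) {n : ℕ} {Δ : Fin (n + 1) → Multiset D} {M : Tm (n + 1)} {α : D} {w : ℕ},
    tsize M ≤ s → Der i Δ M α w →
    ∀ (p : Fin (n + 1)) (N : Tm n) (L : List ((Fin n → Multiset D) × D × ℕ)),
    (↑(L.map fun r => r.2.1) : Multiset D) = Δ p →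
    (∀ r ∈ L, Der i r.1 N r.2.1 r.2.2) →
    Der i (rem p Δ + (L.map fun r => r.1).sum) (M.subst (sub1 p N)) α
      (w + (L.map fun r => r.2.2).sum) := by
  intro s
  induction s using Nat.strong_induction_on with
  | _ s ihs =>
  intro n Δ M α w hs h p N L hty hL
  cases h with
  | var k =>
    -- Δ = single k α, M = var k, w = 0, α = α
    rw [subst_var]
    by_cases hkp : k = p
    · subst hkp
      have h1 : single k α k = ({α} : Multiset D) := by simp [single]
      rw [h1] at hty
      have h2 : L.map (fun r => r.2.1) = [α] := Multiset.coe_eq_singleton.mp hty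
      match L, h2 with
      | [r], h2 =>
        have hr : r.2.1 = α := by simpa using h2
        have hctx : rem k (single k α) + ([r].map fun r => r.1).sum = r.1 := by
          funext j
          simp [rem, single, Fin.succAbove_ne k j]
        rw [hctx, sub1_self]
        have := hL r (by simp)
        rw [hr] at this
        simpa using this
    · obtain ⟨j, rfl⟩ := Fin.exists_succAbove_eq hkp
      have h1 : single (p.succAbove j) α p = (0 : Multiset D) := by
        simp [single, Fin.ne_succAbove p j]
      rw [h1] at hty
      have hL0 : L = [] := List.map_eq_nil_iff.mp ((Multiset.coe_eq_zero _).mp hty)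
      subst hL0
      have hctx : rem p (single (p.succAbove j) α) + (([] : List ((Fin n → Multiset D) × D × ℕ)).map fun r => r.1).sum
          = single j α := by
        funext j'
        simp [rem, single, Fin.succAbove_right_inj]
      rw [hctx, sub1_succAbove]
      simpa using Der.var j α
  | @lam _ _ a M' α₀ _ h' =>
    -- M = lam M', α = i (a, α₀), h' : Der i (cons a Δ) M' α₀ w
    have hsz : tsize M' < s := by
      have : tsize (Tm.lam M') = tsize M' + 1 := rfl
      omega
    have hty' : (↑((L.map fun r => ((Fin.cons 0 r.1 : Fin (n+1) → Multiset D), r.2.1, r.2.2)).map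
        fun r => r.2.1) : Multiset D) = (Fin.cons a Δ : Fin (n+2) → Multiset D) p.succ := by
      rw [Fin.cons_succ]
      simpa [List.map_map, Function.comp_def] using hty
    have hL' : ∀ r ∈ (L.map fun r => ((Fin.cons 0 r.1 : Fin (n+1) → Multiset D), r.2.1, r.2.2)),
        Der i r.1 (N.rename Fin.succ) r.2.1 r.2.2 := by
      intro r hr
      simp only [List.mem_map] at hr
      obtain ⟨r', hr', rfl⟩ := hr
      have := der_rename (hL r' hr') Fin.succ
      rwa [ren_succ] at this
    have H := ihs (tsize M') hsz le_rfl h' p.succ (N.rename Fin.succ) _ hty' hL'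
    rw [rem_cons] at H
    have hc : ((L.map fun r => ((Fin.cons 0 r.1 : Fin (n+1) → Multiset D), r.2.1, r.2.2)).map
        fun r => r.1).sum = Fin.cons 0 ((L.map fun r => r.1).sum) := by
      rw [List.map_map]
      exact sum_map_cons0 L
    rw [hc, cons_add_cons, add_zero] at H
    have hw : ((L.map fun r => ((Fin.cons 0 r.1 : Fin (n+1) → Multiset D), r.2.1, r.2.2)).map
        fun r => r.2.2).sum = (L.map fun r => r.2.2).sum := by
      simp [List.map_map, Function.comp_def]
    rw [hw] at H
    show Der i _ (Tm.lam (M'.subst _)) _ _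
    rw [sub1_lift]
    exact Der.lam H
  | @app _ Γ' M₁ M₂ _ m₁ l h1 h2 =>
    -- Δ = Γ' + sum, M = app M₁ M₂, w = m₁ + sum + 1
    have hsz1 : tsize M₁ < s := by
      have : tsize (Tm.app M₁ M₂) = tsize M₁ + tsize M₂ + 1 := rfl
      omega
    have hsz2 : tsize M₂ < s := by
      have : tsize (Tm.app M₁ M₂) = tsize M₁ + tsize M₂ + 1 := rfl
      omega
    have hev : (Γ' + (l.map fun q => q.1).sum) p
        = Γ' p + (l.map fun q => q.1 p).sum := by
      rw [Pi.add_apply, listSum_apply, List.map_map]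
      rfl
    rw [hev] at hty
    obtain ⟨L₁, L₂, hperm, hty1, hty2⟩ := split_list (fun r => r.2.1) L (Γ' p) _ hty
    have hmem : ∀ r, r ∈ L₁ ∨ r ∈ L₂ → r ∈ L := fun r hr =>
      hperm.mem_iff.mp (List.mem_append.mpr hr)
    have H₁ := ihs (tsize M₁) hsz1 le_rfl h1 p N L₁ hty1
      (fun r hr => hL r (hmem r (Or.inl hr)))
    obtain ⟨l', hl'ty, hl'der, hl'ctx, hl'w⟩ :=
      build (fun Γ'' => Γ'' p) (rem p) (fun c β t => Der i c N β t)
        (fun c β t => Der i c (M₂.subst (sub1 p N)) β t) l L₂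
        (fun q hq L' h1' h2' => ihs (tsize M₂) hsz2 le_rfl (h2 q hq) p N L' h1' h2')
        hty2 (fun r hr => hL r (hmem r (Or.inr hr)))
    rw [← hl'ty] at H₁
    have H := Der.app l' H₁ hl'der
    have hsf : (L₁.map fun r => r.1).sum + (L₂.map fun r => r.1).sum
        = (L.map fun r => r.1).sum := by
      have := (hperm.map fun r => r.1).sum_eq
      rwa [List.map_append, List.sum_append] at this
    have hsw : (L₁.map fun r => r.2.2).sum + (L₂.map fun r => r.2.2).sum
        = (L.map fun r => r.2.2).sum := by
      have := (hperm.map fun r => r.2.2).sum_eq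
      rwa [List.map_append, List.sum_append] at this
    have hctx : rem p (Γ' + (l.map fun q => q.1).sum) + (L.map fun r => r.1).sum
        = (rem p Γ' + (L₁.map fun r => r.1).sum) + (l'.map fun q => q.1).sum := by
      rw [hl'ctx, rem_add, rem_listSum, List.map_map, ← hsf]
      simp only [Function.comp_def]
      abel
    have hw : m₁ + (l.map fun q => q.2.2).sum + 1 + (L.map fun r => r.2.2).sum
        = m₁ + (L₁.map fun r => r.2.2).sum + (l'.map fun q => q.2.2).sum + 1 := by
      omega
    show Der i _ (Tm.app (M₁.subst (sub1 p N)) (M₂.subst (sub1 p N))) _ _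
    rw [hctx, hw]
    exact H



/-- Weighted subject reduction for a β-redex: contracting the redex yields a derivation
of the same judgment with exactly one application rule fewer. -/
theorem stmt_10 {D : Type} [Infinite D] (i : Multiset D × D → D)
    (hi : Function.Injective i) {n : ℕ} {Γ : Fin n → Multiset D}
    {M : Tm (n + 1)} {N : Tm n} {α : D} {m : ℕ}
    (h : Der i Γ (.app (.lam M) N) α m) :
    ∃ m' : ℕ, m = m' + 1 ∧ Der i Γ (M.subst1 N) α m' := by
  cases h with
  | @app _ Γ₀ _ _ _ m₁ l h1 h2 =>
    generalize hE : i (↑(l.map fun q => q.2.1), α) = β at h1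
    cases h1 with
    | @lam _ _ a _ α₀ _ h3 =>
      have hpair := hi hE
      injection hpair with ha hα
      subst hα
      have hty : (↑(l.map fun q => q.2.1) : Multiset D)
          = (Fin.cons a Γ₀ : Fin (n+1) → Multiset D) (0 : Fin (n+1)) := by
        rw [Fin.cons_zero, ← ha]
      have H := key (i := i) (tsize M) le_rfl h3 0 N l hty h2
      have hrem : rem (0 : Fin (n+1)) (Fin.cons a Γ₀) = Γ₀ := by
        funext j
        show (Fin.cons a Γ₀ : Fin (n+1) → Multiset D) ((0 : Fin (n+1)).succAbove j) = Γ₀ j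
        rw [Fin.zero_succAbove, Fin.cons_succ]
      have hsub : sub1 (0 : Fin (n+1)) N = Fin.cases (motive := fun _ => Tm n) N Tm.var := by
        funext k
        refine Fin.cases ?_ (fun j => ?_) k
        · rw [Fin.cases_zero]; exact sub1_self 0 N
        · rw [Fin.cases_succ,
            show (j.succ : Fin (n+1)) = (0 : Fin (n+1)).succAbove j from
              (Fin.zero_succAbove j).symm, sub1_succAbove]
      rw [hrem, hsub] at H
      exact ⟨m₁ + (l.map fun q => q.2.2).sum, rfl, H⟩
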